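/- Let f : ℝⁿ → ℝ be differentiable and let μ₁ > 0. Then f satisfies f(y) ≥ f(x) + ⟨∇f(x), y − x⟩ + (μ₁/2)‖y − x‖₁² for all x, y ∈ ℝⁿ if and only if ⟨∇f(y) − ∇f(x), y − x⟩ ≥ μ₁‖y − x‖₁² for all x, y ∈ ℝⁿ. -/

import Mathlib

open scoped RealInnerProductSpace

/-- equivalent characterization of `μ₁`-strong convexity in the
1-norm via gradient monotonicity. -/
theorem strong_convexity_one_norm_iff_monotone_gradient {n : ℕ}
    (f : EuclideanSpace ℝ (Fin n) → ℝ)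
    (f' : EuclideanSpace ℝ (Fin n) → EuclideanSpace ℝ (Fin n))
    (hf : ∀ x, HasGradientAt f (f' x) x)
    (μ₁ : ℝ) (hμ₁ : 0 < μ₁) :
    (∀ x y, f y ≥ f x + ⟪f' x, y - x⟫ + μ₁ / 2 * (∑ i, |y i - x i|) ^ 2) ↔
    (∀ x y : EuclideanSpace ℝ (Fin n),
      ⟪f' y - f' x, y - x⟫ ≥ μ₁ * (∑ i, |y i - x i|) ^ 2) := by
  constructor
  · intro H x y
    have h1 := H x y
    have h2 := H y x
    have hs : (∑ i, |x i - y i|) = ∑ i, |y i - x i| :=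
      Finset.sum_congr rfl fun i _ => abs_sub_comm _ _
    rw [hs] at h2
    have e1 : ⟪f' y - f' x, y - x⟫ = ⟪f' y, y - x⟫ - ⟪f' x, y - x⟫ :=
      inner_sub_left _ _ _
    have e2 : ⟪f' y, x - y⟫ = -⟪f' y, y - x⟫ := by
      rw [show x - y = -(y - x) by abel, inner_neg_right]
    rw [e2] at h2
    rw [e1]
    linarith
  · intro H x y
    set v : EuclideanSpace ℝ (Fin n) := y - x with hv
    set s : ℝ := ∑ i, |y i - x i| with hs
    set c : ℝ := ⟪f' x, v⟫ with hc
    -- derivative of the line map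
    have hz : ∀ t : ℝ, HasDerivAt (fun t : ℝ => x + t • v) v t := by
      intro t
      simpa using ((hasDerivAt_id t).smul_const v).const_add x
    have hg : ∀ t : ℝ, HasDerivAt (fun t : ℝ => f (x + t • v))
        ⟪f' (x + t • v), v⟫ t := by
      intro t
      have := ((hf (x + t • v)).hasFDerivAt).comp_hasDerivAt t (hz t)
      exact this
    -- h t := f (x + t•v) - t*c - μ₁/2 * s^2 * t^2
    set h : ℝ → ℝ := fun t => f (x + t • v) - (t * c + μ₁ / 2 * s ^ 2 * t ^ 2)
      with hh
    have hderiv : ∀ t : ℝ, HasDerivAt h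
        (⟪f' (x + t • v), v⟫ - (c + μ₁ * s ^ 2 * t)) t := by
      intro t
      have hp : HasDerivAt (fun t : ℝ => t * c + μ₁ / 2 * s ^ 2 * t ^ 2)
          (c + μ₁ * s ^ 2 * t) t := by
        have h1 := (hasDerivAt_id t).mul_const c
        have h2 := (hasDerivAt_pow 2 t).const_mul (μ₁ / 2 * s ^ 2)
        have : HasDerivAt (fun t : ℝ => t * c + μ₁ / 2 * s ^ 2 * t ^ 2)
            (1 * c + μ₁ / 2 * s ^ 2 * (((2:ℕ):ℝ) * t ^ (2 - 1))) t := h1.add h2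
        convert this using 1
        push_cast
        ring
      exact (hg t).sub hp
    -- the key pointwise derivative bound
    have hkey : ∀ t : ℝ, 0 < t →
        ⟪f' (x + t • v), v⟫ - (c + μ₁ * s ^ 2 * t) ≥ 0 := by
      intro t ht
      have hH := H x (x + t • v)
      have hsub : (x + t • v) - x = t • v := by abel
      rw [hsub] at hH
      have hsum : (∑ i, |(x + t • v) i - x i|) = t * s := by
        rw [hs, Finset.mul_sum]
        refine Finset.sum_congr rfl fun i _ => ?_
        have : (x + t • v) i - x i = t * (y i - x i) := by
          simp [hv]
        rw [this, abs_mul, abs_of_pos ht]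
      rw [hsum] at hH
      have hinner : ⟪f' (x + t • v) - f' x, t • v⟫
          = t * (⟪f' (x + t • v), v⟫ - c) := by
        rw [real_inner_smul_right, inner_sub_left, hc]
      rw [hinner] at hH
      have : t * (⟪f' (x + t • v), v⟫ - c) ≥ μ₁ * (t * s) ^ 2 := hH
      nlinarith [this, sq_nonneg s]
    -- monotonicity of h on [0,1]
    have hmono : MonotoneOn h (Set.Icc (0:ℝ) 1) := by
      apply monotoneOn_of_deriv_nonneg (convex_Icc 0 1)
      · exact (fun t _ => ((hderiv t).differentiableAt.continuousAt.continuousWithinAt))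
      · intro t ht
        exact ((hderiv t).differentiableAt.differentiableWithinAt)
      · intro t ht
        rw [interior_Icc] at ht
        rw [(hderiv t).deriv]
        exact hkey t ht.1
    have h01 : h 0 ≤ h 1 := hmono (by norm_num) (by norm_num) (by norm_num)
    have h0 : h 0 = f x := by simp [hh]
    have h1v : x + (1:ℝ) • v = y := by
      rw [one_smul, hv]; abel
    have h1v' : x + v = y := by rw [hv]; abel
    have h1 : h 1 = f y - (c + μ₁ / 2 * s ^ 2) := by
      simp [hh, h1v']
    rw [h0, h1] at h01
    show f y ≥ f x + c + μ₁ / 2 * s ^ 2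
    linarith
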